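/- arXiv:2401.08849 — 4 statements merged into one kernel-verified Lean document; each statement's English description precedes it below -/
import Mathlib

section
/- Let (a_n)_{n∈ℕ} be a sequence of nonnegative real numbers with a₁ > 0, and let S_n = a₁ + a₂ + ⋯ + a_n. Then for every real ξ > 0 the series Σ_{n=1}^∞ a_n / S_n^{1+ξ} converges. -/
lemma key_rpow_ineq (ξ : ℝ) (hξ : 0 < ξ) {s t : ℝ} (hs : 0 < s) (hst : s ≤ t) :
    (t - s) / t ^ ((1:ℝ) + ξ) ≤ (s ^ (-ξ) - t ^ (-ξ)) / ξ := by
  rcases eq_or_lt_of_le hst with rfl | h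
  · simp
  have ht : 0 < t := hs.trans h
  have hderiv : ∀ x ∈ Set.Ioo s t, HasDerivAt (fun x : ℝ => x ^ (-ξ))
      (-ξ * x ^ (-ξ - 1)) x := by
    intro x hx
    exact Real.hasDerivAt_rpow_const (Or.inl (ne_of_gt (hs.trans hx.1)))
  have hcont : ContinuousOn (fun x : ℝ => x ^ (-ξ)) (Set.Icc s t) := by
    apply ContinuousOn.rpow_const continuousOn_id
    intro x hx
    exact Or.inl (ne_of_gt (lt_of_lt_of_le hs hx.1))
  obtain ⟨c, hc, hceq⟩ := exists_hasDerivAt_eq_slope (fun x : ℝ => x ^ (-ξ))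
    (fun x => -ξ * x ^ (-ξ - 1)) h hcont hderiv
  have hc0 : 0 < c := hs.trans hc.1
  have hts : t - s ≠ 0 := by linarith
  have h1 : s ^ (-ξ) - t ^ (-ξ) = ξ * c ^ (-ξ - 1) * (t - s) := by
    have h' := (div_eq_iff hts).mp hceq.symm
    linear_combination -h'
  have h2 : t ^ (-ξ - 1) ≤ c ^ (-ξ - 1) :=
    Real.rpow_le_rpow_of_nonpos hc0 hc.2.le (by linarith)
  have h3 : (t ^ ((1:ℝ) + ξ))⁻¹ = t ^ (-ξ - 1) := by
    rw [← Real.rpow_neg ht.le]; ring_nf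
  rw [h1]
  calc (t - s) / t ^ ((1:ℝ) + ξ) = (t - s) * t ^ (-ξ - 1) := by
        rw [div_eq_mul_inv, h3]
    _ ≤ (t - s) * c ^ (-ξ - 1) := by
        apply mul_le_mul_of_nonneg_left h2 (by linarith)
    _ = ξ * c ^ (-ξ - 1) * (t - s) / ξ := by
        field_simp

/-- if `a₁ > 0` and `a_n ≥ 0`, with `S_n = a₁ + ⋯ + a_n`, then for every
`ξ > 0` the series `Σ a_n / S_n^{1+ξ}` converges. -/
theorem summable_div_partialSum_rpow
    (a : ℕ → ℝ) (ha0 : ∀ n, 0 ≤ a n) (ha1 : 0 < a 1)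
    (S : ℕ → ℝ) (hS : ∀ n, S n = ∑ k ∈ Finset.Icc 1 n, a k)
    (ξ : ℝ) (hξ : 0 < ξ) :
    Summable (fun n : ℕ => a (n + 1) / (S (n + 1)) ^ ((1 : ℝ) + ξ)) := by
  have hrec : ∀ n, S (n + 1) = S n + a (n + 1) := by
    intro n
    rw [hS, hS, Finset.sum_Icc_succ_top (Nat.one_le_iff_ne_zero.mpr (Nat.succ_ne_zero n))]
  have hS1 : S 1 = a 1 := by rw [hS]; simp
  have hSpos : ∀ n, 0 < S (n + 1) := by
    intro n
    induction n with
    | zero => rw [hS1]; exact ha1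
    | succ m ih => rw [hrec (m + 1)]; have := ha0 (m + 2); linarith
  set f : ℕ → ℝ := fun n => a (n + 1) / S (n + 1) ^ ((1 : ℝ) + ξ) with hf
  set g : ℕ → ℝ := fun n => S (n + 1) ^ (-ξ) with hg
  have hf0 : ∀ n, 0 ≤ f n := fun n =>
    div_nonneg (ha0 _) (Real.rpow_pos_of_pos (hSpos n) _).le
  have hg0 : ∀ n, 0 ≤ g n := fun n => (Real.rpow_pos_of_pos (hSpos n) _).le
  have hstep : ∀ n, f (n + 1) ≤ (g n - g (n + 1)) / ξ := by
    intro n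
    have h := key_rpow_ineq ξ hξ (s := S (n + 1)) (t := S (n + 2)) (hSpos n)
      (by rw [hrec (n + 1)]; have := ha0 (n + 2); linarith)
    have ha' : a (n + 2) = S (n + 2) - S (n + 1) := by rw [hrec (n + 1)]; ring
    simpa [hf, hg, ha'] using h
  apply summable_of_sum_range_le (c := f 0 + g 0 / ξ) hf0
  intro n
  match n with
  | 0 =>
    simp only [Finset.sum_range_zero]
    have := div_nonneg (hg0 0) hξ.le
    linarith [hf0 0]
  | Nat.succ m =>
    rw [Finset.sum_range_succ']
    have h1 : ∑ i ∈ Finset.range m, f (i + 1)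
        ≤ ∑ i ∈ Finset.range m, (g i - g (i + 1)) / ξ :=
      Finset.sum_le_sum fun i _ => hstep i
    have h2 : ∑ i ∈ Finset.range m, (g i - g (i + 1)) / ξ = (g 0 - g m) / ξ := by
      rw [← Finset.sum_div, Finset.sum_range_sub' g m]
    have h3 : (g 0 - g m) / ξ ≤ g 0 / ξ := by
      gcongr
      linarith [hg0 m]
    linarith
end

section
/- Let (a_n)_{n∈ℕ} be a sequence of nonnegative real numbers with a₁ > 0, and let S_n = a₁ + a₂ + ⋯ + a_n. Then for every N ∈ ℕ the partial sum satisfies Σ_{n=1}^{N} a_n / S_n ≤ 1 + log(S_N) − log(a₁). -/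
/-- if `a₁ > 0` and `a_n ≥ 0`, with `S_n = a₁ + ⋯ + a_n`, then for every
`N ∈ ℕ` one has `Σ_{n=1}^N a_n / S_n ≤ 1 + log S_N − log a₁`. -/
theorem partialSum_div_le_one_add_log
    (a : ℕ → ℝ) (ha0 : ∀ n, 0 ≤ a n) (ha1 : 0 < a 1)
    (S : ℕ → ℝ) (hS : ∀ n, S n = ∑ k ∈ Finset.Icc 1 n, a k)
    (N : ℕ) (hN : 1 ≤ N) :
    ∑ n ∈ Finset.Icc 1 N, a n / S n ≤ 1 + Real.log (S N) - Real.log (a 1) := by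
  have hSpos : ∀ n, 1 ≤ n → 0 < S n := by
    intro n hn
    rw [hS]
    have : a 1 ≤ ∑ k ∈ Finset.Icc 1 n, a k := by
      apply Finset.single_le_sum (fun i _ => ha0 i)
      simp [hn]
    linarith
  induction N, hN using Nat.le_induction with
  | base =>
    have hS1 : S 1 = a 1 := by rw [hS]; simp
    simp [hS1, div_self ha1.ne']
  | succ n hn ih =>
    have hSn := hSpos n hn
    have hSn1 : S (n + 1) = S n + a (n + 1) := by
      rw [hS, hS, Finset.sum_Icc_succ_top (by omega)]
    have hSn1pos : 0 < S (n + 1) := hSpos _ (by omega)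
    rw [Finset.sum_Icc_succ_top (by omega)]
    have key : a (n + 1) / S (n + 1) ≤ Real.log (S (n + 1)) - Real.log (S n) := by
      have hlog : Real.log (S n / S (n + 1)) ≤ S n / S (n + 1) - 1 :=
        Real.log_le_sub_one_of_pos (by positivity)
      rw [Real.log_div hSn.ne' hSn1pos.ne'] at hlog
      have h1 : S n / S (n + 1) - 1 = -(a (n + 1) / S (n + 1)) := by
        field_simp
        linarith
      rw [h1] at hlog
      linarith
    linarith
end

section
/- Let ρ₁, ρ₂ be real numbers with 1 < ρ₁ and 6ρ₁ < ρ₂. Then there exists a strictly increasing sequence (q_m)_{m∈ℕ} of positive integers which is (1/ρ₁)-separated, satisfies q_m > m for every m ∈ ℕ, and satisfies (log q_m)/(log m) ≤ ρ₂/(ρ₁ − 1) + 1 for all sufficiently large m. -/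
open MeasureTheory Filter Finset

/-- Distance from a real number to the nearest integer. -/
noncomputable def distNearestInt (x : ℝ) : ℝ := |x - round x|

/-- `approxSet Q γ ψ = E(Q, γ, ψ) = {x ∈ [0,1] : ‖Qx − γ‖ ≤ ψ(Q)}`. -/
noncomputable def approxSet (Q : ℕ) (γ : ℝ) (ψ : ℕ → ℝ) : Set ℝ :=
  {x ∈ Set.Icc (0:ℝ) 1 | distNearestInt ((Q : ℝ) * x - γ) ≤ ψ Q}

open scoped Classical in
/-- The counting function `R(x, N) = #{1 ≤ n ≤ N : x ∈ E(q_n, γ, ψ)}`. -/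
noncomputable def countR (q : ℕ → ℕ) (γ : ℝ) (ψ : ℕ → ℝ) (x : ℝ) (N : ℕ) : ℕ :=
  ((Finset.Icc 1 N).filter fun n => x ∈ approxSet (q n) γ ψ).card

/-- A sequence `(q_n)` of positive integers is `α`-separated. -/
def alphaSeparated (q : ℕ → ℕ) (α : ℝ) : Prop :=
  ∃ m₀ : ℕ, ∀ m n : ℕ, m₀ ≤ m → m < n →
    ¬ ∃ s t : ℕ, 1 ≤ |(s : ℤ) * (q m : ℤ) - (t : ℤ) * (q n : ℤ)| ∧
        ((|(s : ℤ) * (q m : ℤ) - (t : ℤ) * (q n : ℤ)| : ℤ) : ℝ) < (q m : ℝ) ^ α ∧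
        s ≤ m ^ 5

/-- Fourier transform `μ̂(t) = ∫ e^{−2πitx} dμ(x)` of a finite measure on `ℝ`, at `t ∈ ℤ`. -/
noncomputable def muHat (μ : Measure ℝ) (t : ℤ) : ℂ :=
  ∫ x, Complex.exp (-2 * Real.pi * Complex.I * (t : ℂ) * (x : ℂ)) ∂μ

/-- `Ψ(N) = Σ_{n=1}^N ψ(q_n)`. -/
noncomputable def PsiSum (q : ℕ → ℕ) (ψ : ℕ → ℝ) (N : ℕ) : ℝ :=
  ∑ n ∈ Finset.Icc 1 N, ψ (q n)

/-- `E(N) = Σ_{1 ≤ m < n ≤ N} gcd(q_m, q_n) · min(ψ(q_m)/q_m, ψ(q_n)/q_n)`. -/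
noncomputable def gcdErr (q : ℕ → ℕ) (ψ : ℕ → ℝ) (N : ℕ) : ℝ :=
  ∑ n ∈ Finset.Icc 1 N, ∑ m ∈ Finset.Ico 1 n,
    (Nat.gcd (q m) (q n) : ℝ) * min (ψ (q m) / (q m : ℝ)) (ψ (q n) / (q n : ℝ))

/-- `W_A(γ; ψ)`: points of `[0,1]` inhomogeneously `ψ`-well approximable along `A = (q_n)`. -/
def Wset (q : ℕ → ℕ) (γ : ℝ) (ψ : ℕ → ℝ) : Set ℝ :=
  {x ∈ Set.Icc (0:ℝ) 1 |
    ∀ m : ℕ, ∃ n : ℕ, m ≤ n ∧ 1 ≤ n ∧ distNearestInt ((q n : ℝ) * x - γ) ≤ ψ (q n)}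

/-- existence of a `(1/ρ₁)`-separated sequence of polynomial growth. -/
theorem exists_alphaSeparated_polynomial_growth
    (ρ₁ ρ₂ : ℝ) (hρ₁ : 1 < ρ₁) (hρ₁ρ₂ : 6 * ρ₁ < ρ₂) :
    ∃ q : ℕ → ℕ, StrictMono q ∧ (∀ m, 1 ≤ q m) ∧
      alphaSeparated q (1 / ρ₁) ∧
      (∀ m : ℕ, 1 ≤ m → m < q m) ∧
      ∃ m₁ : ℕ, ∀ m : ℕ, m₁ ≤ m →
        Real.log (q m) / Real.log m ≤ ρ₂ / (ρ₁ - 1) + 1 := by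
  have h1 : (0:ℝ) < ρ₁ - 1 := by linarith
  have hρ₁0 : (0:ℝ) < ρ₁ := by linarith
  set K : ℕ := ⌈2 / (ρ₁ - 1)⌉₊ with hKdef
  have hKge : 2 / (ρ₁ - 1) ≤ (K : ℝ) := Nat.le_ceil _
  have hKρ : (2:ℝ) ≤ (K : ℝ) * (ρ₁ - 1) := by
    rw [div_le_iff₀ h1] at hKge; linarith
  have hKub : (K:ℝ) < 2 / (ρ₁ - 1) + 1 := Nat.ceil_lt_add_one (by positivity)
  refine ⟨fun m => (m+1) * 2 ^ (K * Nat.log 2 (m+1)), ?_, ?_, ?_, ?_, ?_⟩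
  · -- StrictMono
    intro m n hmn
    have hL : Nat.log 2 (m+1) ≤ Nat.log 2 (n+1) := Nat.log_mono_right (by omega)
    have h2 : (2:ℕ) ^ (K * Nat.log 2 (m+1)) ≤ 2 ^ (K * Nat.log 2 (n+1)) :=
      Nat.pow_le_pow_right (by norm_num) (Nat.mul_le_mul_left _ hL)
    have hp : 0 < (2:ℕ) ^ (K * Nat.log 2 (m+1)) := Nat.pow_pos (by norm_num)
    calc (m+1) * 2 ^ (K * Nat.log 2 (m+1))
        < (n+1) * 2 ^ (K * Nat.log 2 (m+1)) := by
          exact Nat.mul_lt_mul_of_lt_of_le (by omega) (le_refl _) hp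
      _ ≤ (n+1) * 2 ^ (K * Nat.log 2 (n+1)) := Nat.mul_le_mul_left _ h2
  · -- positivity
    intro m
    have hp : 0 < (2:ℕ) ^ (K * Nat.log 2 (m+1)) := Nat.pow_pos (by norm_num)
    exact Nat.one_le_iff_ne_zero.mpr (by positivity)
  · -- alphaSeparated
    refine ⟨3, ?_⟩
    intro m n hm hmn
    rintro ⟨s, t, hd1, hd2, -⟩
    set Lm := Nat.log 2 (m+1) with hLm
    set B : ℕ := 2 ^ (K * Lm) with hBdef
    set qm : ℕ := (m+1) * 2 ^ (K * Lm) with hqm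
    set qn : ℕ := (n+1) * 2 ^ (K * Nat.log 2 (n+1)) with hqn
    -- B divides qm and qn
    have hBm : B ∣ qm := Dvd.intro_left _ rfl
    have hL : Lm ≤ Nat.log 2 (n+1) := Nat.log_mono_right (by omega)
    have hBn : B ∣ qn := by
      refine Dvd.dvd.mul_left ?_ _
      exact pow_dvd_pow 2 (Nat.mul_le_mul_left _ hL)
    set d : ℤ := (s : ℤ) * (qm : ℤ) - (t : ℤ) * (qn : ℤ) with hd
    have hBd : (B:ℤ) ∣ d := by
      apply dvd_sub
      · exact Dvd.dvd.mul_left (Int.natCast_dvd_natCast.mpr hBm) _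
      · exact Dvd.dvd.mul_left (Int.natCast_dvd_natCast.mpr hBn) _
    have hBled : (B:ℤ) ≤ |d| := Int.le_of_dvd (by omega) ((dvd_abs _ _).mpr hBd)
    have hBledR : (B:ℝ) ≤ ((|d| : ℤ) : ℝ) := by exact_mod_cast hBled
    -- now the key bound (qm : ℝ) ^ (1/ρ₁) ≤ B
    have hb0 : (0:ℝ) < (B:ℝ) := by positivity
    have hm4 : (4:ℝ) ≤ (m:ℝ) + 1 := by
      have : (3:ℕ) ≤ m := hm
      have : (3:ℝ) ≤ (m:ℝ) := by exact_mod_cast this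
      linarith
    set x : ℝ := ((m:ℝ) + 1) / 2 with hx
    have hx2 : (2:ℝ) ≤ x := by rw [hx]; linarith
    have hx1 : (1:ℝ) ≤ x := by linarith
    have hx0 : (0:ℝ) ≤ x := by linarith
    -- (m+1) < 2^(Lm+1)
    have hlt : (m+1 : ℕ) < 2 ^ (Lm + 1) := Nat.lt_pow_succ_log_self (by norm_num) _
    have hltR : (m:ℝ) + 1 < 2 * (2:ℝ) ^ Lm := by
      have : ((m+1 : ℕ) : ℝ) < ((2 ^ (Lm+1) : ℕ) : ℝ) := by exact_mod_cast hlt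
      push_cast at this
      rw [pow_succ] at this
      linarith
    have hxy : x ≤ (2:ℝ) ^ Lm := by rw [hx]; rw [div_le_iff₀ (by norm_num : (0:ℝ) < 2)]; linarith
    have hBxK : x ^ K ≤ (B:ℝ) := by
      have : (B:ℝ) = ((2:ℝ) ^ Lm) ^ K := by
        rw [hBdef]; push_cast; rw [← pow_mul, Nat.mul_comm]
      rw [this]
      exact pow_le_pow_left₀ hx0 hxy K
    -- x ^ K ^ (ρ₁ - 1) ≥ x ^ 2 ≥ m + 1
    have hkey : (m:ℝ) + 1 ≤ (B:ℝ) ^ (ρ₁ - 1) := by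
      have h1' : ((m:ℝ) + 1) ≤ x ^ (2:ℝ) := by
        rw [show ((2:ℝ)) = ((2:ℕ):ℝ) by norm_num, Real.rpow_natCast]
        rw [hx]; nlinarith
      have h2' : x ^ (2:ℝ) ≤ x ^ ((K:ℝ) * (ρ₁ - 1)) :=
        Real.rpow_le_rpow_of_exponent_le hx1 hKρ
      have h3' : x ^ ((K:ℝ) * (ρ₁ - 1)) = (x ^ K) ^ (ρ₁ - 1) := by
        rw [Real.rpow_mul hx0, Real.rpow_natCast]
      have h4' : (x ^ K) ^ (ρ₁ - 1) ≤ (B:ℝ) ^ (ρ₁ - 1) :=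
        Real.rpow_le_rpow (by positivity) hBxK (by linarith)
      linarith [h1', h2', h3' ▸ h2', h4']
    have hqB : (qm : ℝ) ≤ (B:ℝ) ^ ρ₁ := by
      have : (qm : ℝ) = ((m:ℝ) + 1) * (B:ℝ) := by rw [hqm, hBdef]; push_cast; ring
      rw [this]
      calc ((m:ℝ) + 1) * (B:ℝ) ≤ (B:ℝ) ^ (ρ₁ - 1) * (B:ℝ) :=
            mul_le_mul_of_nonneg_right hkey (le_of_lt hb0)
        _ = (B:ℝ) ^ (ρ₁ - 1) * (B:ℝ) ^ (1:ℝ) := by rw [Real.rpow_one]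
        _ = (B:ℝ) ^ (ρ₁ - 1 + 1) := (Real.rpow_add hb0 _ _).symm
        _ = (B:ℝ) ^ ρ₁ := by ring_nf
    have hfinal : (qm : ℝ) ^ (1/ρ₁) ≤ (B:ℝ) := by
      calc (qm : ℝ) ^ (1/ρ₁) ≤ ((B:ℝ) ^ ρ₁) ^ (1/ρ₁) :=
            Real.rpow_le_rpow (by positivity) hqB (by positivity)
        _ = (B:ℝ) ^ (ρ₁ * (1/ρ₁)) := (Real.rpow_mul (le_of_lt hb0) _ _).symm
        _ = (B:ℝ) ^ (1:ℝ) := by rw [mul_one_div_cancel (ne_of_gt hρ₁0)]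
        _ = (B:ℝ) := Real.rpow_one _
    linarith
  · -- m < q m
    intro m _
    have hp : 1 ≤ (2:ℕ) ^ (K * Nat.log 2 (m+1)) := Nat.one_le_two_pow
    calc m < m + 1 := Nat.lt_succ_self m
      _ = (m+1) * 1 := (Nat.mul_one _).symm
      _ ≤ (m+1) * 2 ^ (K * Nat.log 2 (m+1)) := Nat.mul_le_mul_left _ hp
  · -- growth
    refine ⟨2, ?_⟩
    intro m hm
    have hm2 : (2:ℕ) ≤ m := hm
    have hq_le : ((m+1) * 2 ^ (K * Nat.log 2 (m+1)) : ℕ) ≤ m ^ (2*K+2) := by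
      have h2L : (2:ℕ) ^ Nat.log 2 (m+1) ≤ m+1 := Nat.pow_log_le_self 2 (by omega)
      calc (m+1) * 2 ^ (K * Nat.log 2 (m+1))
          = (m+1) * ((2:ℕ) ^ Nat.log 2 (m+1)) ^ K := by rw [← pow_mul, Nat.mul_comm K]
        _ ≤ (m+1) * (m+1) ^ K := Nat.mul_le_mul_left _ (Nat.pow_le_pow_left h2L K)
        _ = (m+1) ^ (K+1) := by rw [pow_succ, Nat.mul_comm]
        _ ≤ (m^2) ^ (K+1) := Nat.pow_le_pow_left (by nlinarith) _
        _ = m ^ (2*K+2) := by rw [← pow_mul]; ring_nf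
    have hm1R : (1:ℝ) < (m:ℝ) := by
      have : (2:ℝ) ≤ (m:ℝ) := by exact_mod_cast hm2
      linarith
    have hlogm : 0 < Real.log m := Real.log_pos hm1R
    have hq_pos : (0:ℝ) < (((m+1) * 2 ^ (K * Nat.log 2 (m+1)) : ℕ) : ℝ) := by positivity
    have hlog : Real.log (((m+1) * 2 ^ (K * Nat.log 2 (m+1)) : ℕ) : ℝ)
        ≤ (2*(K:ℝ)+2) * Real.log m := by
      have hcast : (((m+1) * 2 ^ (K * Nat.log 2 (m+1)) : ℕ) : ℝ) ≤ ((m:ℝ)) ^ (2*K+2) := by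
        have := hq_le
        have : (((m+1) * 2 ^ (K * Nat.log 2 (m+1)) : ℕ) : ℝ) ≤ ((m ^ (2*K+2) : ℕ) : ℝ) := by
          exact_mod_cast this
        simpa using this
      calc Real.log (((m+1) * 2 ^ (K * Nat.log 2 (m+1)) : ℕ) : ℝ)
          ≤ Real.log ((m:ℝ) ^ (2*K+2)) := Real.log_le_log hq_pos hcast
        _ = ((2*K+2 : ℕ) : ℝ) * Real.log m := Real.log_pow _ _
        _ = (2*(K:ℝ)+2) * Real.log m := by push_cast; ring
    rw [div_le_iff₀ hlogm]
    have hKρ₂ : 2*(K:ℝ)+2 ≤ ρ₂ / (ρ₁ - 1) + 1 := by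
      have hKm : (K:ℝ) * (ρ₁ - 1) < 2 + (ρ₁ - 1) := by
        have h' := mul_lt_mul_of_pos_right hKub h1
        rwa [add_mul, one_mul, div_mul_cancel₀ _ (ne_of_gt h1)] at h'
      have hstep : (2*(K:ℝ)+1) * (ρ₁ - 1) ≤ ρ₂ := by nlinarith
      have : 2*(K:ℝ)+1 ≤ ρ₂ / (ρ₁ - 1) := (le_div_iff₀ h1).mpr hstep
      linarith
    calc Real.log (((m+1) * 2 ^ (K * Nat.log 2 (m+1)) : ℕ) : ℝ)
        ≤ (2*(K:ℝ)+2) * Real.log m := hlog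
      _ ≤ (ρ₂ / (ρ₁ - 1) + 1) * Real.log m :=
          mul_le_mul_of_nonneg_right hKρ₂ (le_of_lt hlogm)
end

section
/- Let ρ₁, ρ₂ be real numbers with 1 < ρ₁ and 6ρ₁ < ρ₂. Then there exists a strictly increasing sequence (q_t)_{t∈ℕ} of positive integers which is (1/ρ₁)-separated, satisfies sup_{n∈ℕ} Σ_{m=1}^{n−1} gcd(q_m, q_n)/q_n < ∞, and satisfies, for every ε > 0, (log q_t)/(log t) ≤ ρ₂/(ρ₁ − 1) + 1 + ε for all sufficiently large t. Consequently, for every ψ : ℕ → [0,1] and every γ ∈ [0,1], the gcd sum satisfies E(N) = Σ_{1≤m<n≤N} gcd(q_m,q_n)·min(ψ(q_m)/q_m, ψ(q_n)/q_n) = O(Σ_{n=1}^N ψ(q_n)). -/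
open MeasureTheory Filter Finset

namespace Sep16

noncomputable def Fc (r : ℝ) (c : ℕ) : ℕ := ⌈((c : ℝ) * (7*r - 5) + 8*(r-1)) / (2*r)⌉₊

noncomputable def cs (r : ℝ) : ℕ → ℕ
  | 0 => 1
  | k+1 => Fc r (cs r k)

noncomputable def As (r : ℝ) (k : ℕ) : ℕ := ⌈(2*(cs r k : ℝ) + 1)/(r-1)⌉₊

noncomputable def Ns (r : ℝ) : ℕ → ℕ
  | 0 => 0
  | k+1 => Ns r k + 2^(cs r k)

variable {r : ℝ}

lemma cs_lt_succ (hr : 1 < r) (k : ℕ) : cs r k < cs r (k+1) := by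
  show cs r k < Fc r (cs r k)
  rw [Fc, Nat.lt_ceil]
  have h2r : (0:ℝ) < 2*r := by linarith
  rw [lt_div_iff₀ h2r]
  have : (0:ℝ) ≤ (cs r k : ℝ) := Nat.cast_nonneg _
  nlinarith

lemma cs_mono (hr : 1 < r) : StrictMono (cs r) := strictMono_nat_of_lt_succ (cs_lt_succ hr)

lemma one_le_cs (hr : 1 < r) (k : ℕ) : 1 ≤ cs r k := by
  have := (cs_mono hr).le_iff_le.mpr (Nat.zero_le k)
  simpa [cs] using this

lemma succ_le_cs_succ (hr : 1 < r) (k : ℕ) : cs r k + 1 ≤ cs r (k+1) := cs_lt_succ hr k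

lemma As_ge (hr : 1 < r) (k : ℕ) : 2*(cs r k : ℝ) + 1 ≤ (r-1) * As r k := by
  have h := Nat.le_ceil ((2*(cs r k : ℝ) + 1)/(r-1))
  rw [div_le_iff₀ (by linarith : (0:ℝ) < r-1)] at h
  calc 2*(cs r k : ℝ) + 1 ≤ (As r k : ℝ) * (r-1) := h
    _ = (r-1) * As r k := by ring

lemma As_le (hr : 1 < r) (k : ℕ) : (r-1) * As r k ≤ 2*(cs r k : ℝ) + 1 + (r-1) := by
  have h : (As r k : ℝ) < (2*(cs r k : ℝ) + 1)/(r-1) + 1 := by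
    apply Nat.ceil_lt_add_one
    apply div_nonneg (by positivity) (by linarith)
  have h1 : (0:ℝ) < r-1 := by linarith
  rw [div_add' _ _ _ (ne_of_gt h1), lt_div_iff₀ h1] at h
  nlinarith

lemma one_le_As (hr : 1 < r) (k : ℕ) : 1 ≤ As r k := by
  rw [As, Nat.one_le_ceil_iff]
  have : (0:ℝ) ≤ (cs r k : ℝ) := Nat.cast_nonneg _
  apply div_pos (by linarith) (by linarith)

lemma cs_succ_ge (hr : 1 < r) (k : ℕ) : (cs r k : ℝ) * (7*r-5) + 8*(r-1) ≤ (cs r (k+1) : ℝ) * (2*r) := by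
  have h := Nat.le_ceil (((cs r k : ℝ) * (7*r - 5) + 8*(r-1)) / (2*r))
  rw [div_le_iff₀ (by linarith : (0:ℝ) < 2*r)] at h
  simpa [cs, Fc] using h

lemma cs_succ_le (hr : 1 < r) (k : ℕ) :
    (cs r (k+1) : ℝ) * (2*r) ≤ (cs r k : ℝ) * (7*r-5) + 8*(r-1) + 2*r := by
  have hc : (0:ℝ) ≤ (cs r k : ℝ) := Nat.cast_nonneg _
  have h : (cs r (k+1) : ℝ) < ((cs r k : ℝ) * (7*r - 5) + 8*(r-1)) / (2*r) + 1 := by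
    show (Fc r (cs r k) : ℝ) < _
    apply Nat.ceil_lt_add_one
    have : (0:ℝ) ≤ (cs r k : ℝ) * (7*r-5) + 8*(r-1) := by nlinarith
    positivity
  have h2r : (0:ℝ) < 2*r := by linarith
  rw [div_add' _ _ _ (ne_of_gt h2r), lt_div_iff₀ h2r] at h
  nlinarith

lemma key_exp (hr : 1 < r) (k : ℕ) : As r k + 7 * cs r k + 7 ≤ As r (k+1) + 2 * cs r (k+1) := by
  have h1 := As_le hr k
  have h2 := As_ge hr (k+1)
  have h3 := cs_succ_ge hr k
  have hd : (0:ℝ) < r - 1 := by linarith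
  have : ((As r k + 7 * cs r k + 7 : ℕ) : ℝ) ≤ ((As r (k+1) + 2 * cs r (k+1) : ℕ) : ℝ) := by
    push_cast
    nlinarith [Nat.cast_nonneg (α := ℝ) (cs r k), Nat.cast_nonneg (α := ℝ) (cs r (k+1))]
  exact_mod_cast this

-- Ns lemmas
lemma Ns_le_pow (hr : 1 < r) (k : ℕ) : Ns r k ≤ 2^(cs r k) := by
  induction k with
  | zero => simp [Ns, cs]
  | succ k ih =>
    show Ns r k + 2^(cs r k) ≤ 2^(cs r (k+1))
    calc Ns r k + 2^(cs r k) ≤ 2^(cs r k) + 2^(cs r k) := by omega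
      _ = 2^(cs r k + 1) := by ring
      _ ≤ 2^(cs r (k+1)) := Nat.pow_le_pow_right (by norm_num) (succ_le_cs_succ hr k)

lemma Ns_lt_succ (k : ℕ) : Ns r k < Ns r (k+1) := by
  have : 0 < 2^(cs r k) := Nat.pow_pos (by norm_num)
  show Ns r k < Ns r k + 2^(cs r k)
  omega

lemma Ns_mono : StrictMono (Ns r) := strictMono_nat_of_lt_succ Ns_lt_succ

lemma succ_le_Ns (k : ℕ) : k + 1 ≤ Ns r (k+1) := by
  induction k with
  | zero =>
    show 1 ≤ Ns r 0 + 2^(cs r 0)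
    have : 0 < 2^(cs r 0) := Nat.pow_pos (by norm_num)
    omega
  | succ k ih =>
    have := Ns_lt_succ (r := r) (k+1)
    omega

lemma exists_block (t : ℕ) : ∃ k, t ≤ Ns r (k+1) := ⟨t, by have := succ_le_Ns (r:=r) t; omega⟩

noncomputable def Kf (r : ℝ) (t : ℕ) : ℕ := Nat.find (exists_block (r := r) t)

lemma Kf_spec (t : ℕ) : t ≤ Ns r (Kf r t + 1) := Nat.find_spec (exists_block (r := r) t)

lemma Kf_lt (t : ℕ) (ht : 1 ≤ t) : Ns r (Kf r t) < t := by
  rcases Nat.eq_zero_or_pos (Kf r t) with h | h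
  · rw [h]; show Ns r 0 < t; simp [Ns]; omega
  · have h3 := Nat.find_min (exists_block (r := r) t) (m := Kf r t - 1)
    rw [show Nat.find (exists_block (r := r) t) = Kf r t from rfl] at h3
    have h4 := h3 (by omega)
    have h2 : Kf r t - 1 + 1 = Kf r t := by omega
    rw [h2] at h4
    omega

lemma Kf_eq {t k : ℕ} (h1 : Ns r k < t) (h2 : t ≤ Ns r (k+1)) : Kf r t = k := by
  have hle : Kf r t ≤ k := Nat.find_le h2
  rcases Nat.lt_or_ge (Kf r t) k with h | h
  · exfalso
    have : Ns r (Kf r t + 1) ≤ Ns r k := (Ns_mono (r := r)).monotone (by omega)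
    have := Kf_spec (r := r) t
    omega
  · omega

lemma Kf_mono {s t : ℕ} (h : s ≤ t) : Kf r s ≤ Kf r t := by
  apply Nat.find_le
  have := Kf_spec (r := r) t
  omega

noncomputable def qs (r : ℝ) (t : ℕ) : ℕ :=
  if t = 0 then 1 else 2^(As r (Kf r t)) * (4^(cs r (Kf r t)) + (t - Ns r (Kf r t) - 1))

lemma qs_eq {t : ℕ} (ht : 1 ≤ t) :
    qs r t = 2^(As r (Kf r t)) * (4^(cs r (Kf r t)) + (t - Ns r (Kf r t) - 1)) := by
  rw [qs, if_neg (by omega)]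

lemma qs_eq' {t k : ℕ} (h1 : Ns r k < t) (h2 : t ≤ Ns r (k+1)) :
    qs r t = 2^(As r k) * (4^(cs r k) + (t - Ns r k - 1)) := by
  have ht : 1 ≤ t := by omega
  rw [qs_eq ht, Kf_eq h1 h2]

lemma offset_lt {t k : ℕ} (h1 : Ns r k < t) (h2 : t ≤ Ns r (k+1)) :
    t - Ns r k - 1 < 2^(cs r k) := by
  have : Ns r (k+1) = Ns r k + 2^(cs r k) := rfl
  omega

lemma qs_lb {t k : ℕ} (h1 : Ns r k < t) (h2 : t ≤ Ns r (k+1)) :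
    2^(As r k) * 4^(cs r k) ≤ qs r t := by
  rw [qs_eq' h1 h2]
  exact Nat.mul_le_mul_left _ (by omega)

lemma qs_ub {t k : ℕ} (h1 : Ns r k < t) (h2 : t ≤ Ns r (k+1)) :
    qs r t ≤ 2^(As r k) * (4^(cs r k) + 2^(cs r k)) := by
  rw [qs_eq' h1 h2]
  have := offset_lt (r := r) h1 h2
  exact Nat.mul_le_mul_left _ (by omega)

lemma four_pow (c : ℕ) : (4:ℕ)^c = 2^(2*c) := by
  rw [pow_mul]; norm_num

-- the key gap inequality
lemma gap (hr : 1 < r) (k : ℕ) :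
    (Ns r (k+1))^5 * (2^(As r k) * (4^(cs r k) + 2^(cs r k))) +
      2^(As r k) * (4^(cs r k) + 2^(cs r k)) ≤ 2^(As r (k+1)) * 4^(cs r (k+1)) := by
  have hN : Ns r (k+1) ≤ 2^(cs r k + 1) := by
    calc Ns r (k+1) = Ns r k + 2^(cs r k) := rfl
      _ ≤ 2^(cs r k) + 2^(cs r k) := by have := Ns_le_pow hr k; omega
      _ = 2^(cs r k + 1) := by ring
  have hmax : 2^(As r k) * (4^(cs r k) + 2^(cs r k)) ≤ 2^(As r k + 2*(cs r k) + 1) := by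
    rw [four_pow]
    have h1 : (2:ℕ)^(cs r k) ≤ 2^(2*(cs r k)) := Nat.pow_le_pow_right (by norm_num) (by omega)
    calc 2^(As r k) * (2^(2*(cs r k)) + 2^(cs r k))
        ≤ 2^(As r k) * (2^(2*(cs r k)) + 2^(2*(cs r k))) := Nat.mul_le_mul_left _ (by omega)
      _ = 2^(As r k + 2*(cs r k) + 1) := by ring
  calc (Ns r (k+1))^5 * (2^(As r k) * (4^(cs r k) + 2^(cs r k))) +
        2^(As r k) * (4^(cs r k) + 2^(cs r k))
      ≤ (2^(cs r k + 1))^5 * 2^(As r k + 2*(cs r k) + 1) + 2^(As r k + 2*(cs r k) + 1) := by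
        exact Nat.add_le_add (Nat.mul_le_mul (Nat.pow_le_pow_left hN 5) hmax) hmax
    _ = 2^(5*(cs r k) + 5 + (As r k + 2*(cs r k) + 1)) + 2^(As r k + 2*(cs r k) + 1) := by
        rw [← pow_mul, ← pow_add]; ring_nf
    _ ≤ 2^(As r k + 7*(cs r k) + 6) + 2^(As r k + 7*(cs r k) + 6) := by
        have h1 : 5*(cs r k) + 5 + (As r k + 2*(cs r k) + 1) = As r k + 7*(cs r k) + 6 := by ring
        rw [h1]
        have h2 : (2:ℕ)^(As r k + 2*(cs r k) + 1) ≤ 2^(As r k + 7*(cs r k) + 6) :=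
          Nat.pow_le_pow_right (by norm_num) (by omega)
        omega
    _ = 2^(As r k + 7*(cs r k) + 7) := by ring
    _ ≤ 2^(As r (k+1) + 2*(cs r (k+1))) :=
        Nat.pow_le_pow_right (by norm_num) (by have := key_exp hr k; omega)
    _ = 2^(As r (k+1)) * 4^(cs r (k+1)) := by rw [four_pow, pow_add]
lemma qs_lt_succ (hr : 1 < r) (t : ℕ) : qs r t < qs r (t+1) := by
  rcases Nat.eq_zero_or_pos t with h0 | hpos
  · subst h0
    show qs r 0 < qs r 1
    have h1 : Ns r 0 < 1 := by simp [Ns]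
    have h2 : 1 ≤ Ns r 1 := succ_le_Ns 0
    have hlb := qs_lb (r := r) h1 h2
    have hA : 1 ≤ As r 0 := one_le_As hr 0
    have hc : 1 ≤ cs r 0 := one_le_cs hr 0
    have e1 : (2:ℕ) ≤ 2^(As r 0) := by
      calc (2:ℕ) = 2^1 := rfl
        _ ≤ 2^(As r 0) := Nat.pow_le_pow_right (by norm_num) hA
    have e2 : (4:ℕ) ≤ 4^(cs r 0) := by
      calc (4:ℕ) = 4^1 := rfl
        _ ≤ 4^(cs r 0) := Nat.pow_le_pow_right (by norm_num) hc
    have h8 : 2 * 4 ≤ 2^(As r 0) * 4^(cs r 0) := Nat.mul_le_mul e1 e2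
    have hq0 : qs r 0 = 1 := by simp [qs]
    rw [hq0]
    omega
  · set k := Kf r t with hk
    have h1 : Ns r k < t := Kf_lt t hpos
    have h2 : t ≤ Ns r (k+1) := Kf_spec t
    rcases Nat.lt_or_ge t (Ns r (k+1)) with hlt | hge
    · -- same block
      rw [qs_eq' h1 h2, qs_eq' (show Ns r k < t + 1 by omega) (show t + 1 ≤ Ns r (k+1) by omega)]
      have hp : 0 < (2:ℕ)^(As r k) := Nat.pow_pos (by norm_num)
      exact (mul_lt_mul_iff_right₀ hp).mpr (by omega)
    · -- t = Ns r (k+1), next block starts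
      have h3 : Ns r (k+1) < t + 1 := by omega
      have h4 : t + 1 ≤ Ns r (k+2) := by
        have h5 : Ns r (k+2) = Ns r (k+1) + 2^(cs r (k+1)) := rfl
        have hp : 0 < 2^(cs r (k+1)) := Nat.pow_pos (by norm_num)
        omega
      have hub := qs_ub (r := r) h1 h2
      have hlb := qs_lb (r := r) h3 h4
      have hgap := gap hr k
      have hN5 : 0 < (Ns r (k+1))^5 * (2^(As r k) * (4^(cs r k) + 2^(cs r k))) := by
        have hp1 : 0 < Ns r (k+1) := by omega
        have hp2 : 0 < (2:ℕ)^(As r k) := Nat.pow_pos (by norm_num)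
        have hp3 : 0 < (4:ℕ)^(cs r k) := Nat.pow_pos (by norm_num)
        positivity
      omega

lemma qs_mono (hr : 1 < r) : StrictMono (qs r) := strictMono_nat_of_lt_succ (qs_lt_succ hr)

lemma one_le_qs (t : ℕ) : 1 ≤ qs r t := by
  rcases Nat.eq_zero_or_pos t with h0 | hpos
  · simp [h0, qs]
  · have h1 : Ns r (Kf r t) < t := Kf_lt t hpos
    have h2 := Kf_spec (r := r) t
    have := qs_lb (r := r) h1 h2
    have hp : 0 < 2^(As r (Kf r t)) * 4^(cs r (Kf r t)) := by positivity
    omega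

-- minB monotone
lemma minB_le_succ (hr : 1 < r) (k : ℕ) :
    2^(As r k) * 4^(cs r k) ≤ 2^(As r (k+1)) * 4^(cs r (k+1)) := by
  have hgap := gap hr k
  have h1 : 2^(As r k) * 4^(cs r k) ≤ 2^(As r k) * (4^(cs r k) + 2^(cs r k)) :=
    Nat.mul_le_mul_left _ (Nat.le_add_right _ _)
  omega

lemma minB_mono (hr : 1 < r) {j k : ℕ} (h : j ≤ k) :
    2^(As r j) * 4^(cs r j) ≤ 2^(As r k) * 4^(cs r k) :=
  monotone_nat_of_le_succ (minB_le_succ hr) h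

-- cross-block: if Kf m < Kf n then m^5 * qs m + qs m ≤ qs n
lemma cross (hr : 1 < r) {m n : ℕ} (hm : 1 ≤ m) (hn : 1 ≤ n) (hjk : Kf r m < Kf r n) :
    m^5 * qs r m + qs r m ≤ qs r n := by
  set j := Kf r m
  set k := Kf r n
  have hub := qs_ub (r := r) (Kf_lt m hm) (Kf_spec m)
  have hmN : m ≤ Ns r (j+1) := Kf_spec m
  have hgap := gap hr j
  have hlbn := qs_lb (r := r) (Kf_lt n hn) (Kf_spec n)
  have hmono := minB_mono hr (show j + 1 ≤ k by omega)
  calc m^5 * qs r m + qs r m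
      ≤ (Ns r (j+1))^5 * (2^(As r j) * (4^(cs r j) + 2^(cs r j))) +
          2^(As r j) * (4^(cs r j) + 2^(cs r j)) :=
        Nat.add_le_add (Nat.mul_le_mul (Nat.pow_le_pow_left hmN 5) hub) hub
    _ ≤ 2^(As r (j+1)) * 4^(cs r (j+1)) := hgap
    _ ≤ 2^(As r k) * 4^(cs r k) := hmono
    _ ≤ qs r n := hlbn

-- rpow bound: anything in block k, raised to 1/r, is at most 2^(As r k)
lemma sep_bound (hr : 1 < r) (k : ℕ) {x : ℕ}
    (hx : x ≤ 2^(As r k) * (4^(cs r k) + 2^(cs r k))) :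
    (x : ℝ) ^ (1/r : ℝ) ≤ ((2:ℕ)^(As r k) : ℝ) := by
  have hr0 : (0:ℝ) < r := by linarith
  have hxR : (x : ℝ) ≤ (2:ℝ) ^ ((As r k : ℝ) * r) := by
    have h1 : x ≤ 2^(As r k + 2*(cs r k) + 1) := by
      refine hx.trans ?_
      rw [four_pow]
      have h2 : (2:ℕ)^(cs r k) ≤ 2^(2*(cs r k)) := Nat.pow_le_pow_right (by norm_num) (by omega)
      calc 2^(As r k) * (2^(2*(cs r k)) + 2^(cs r k))
          ≤ 2^(As r k) * (2^(2*(cs r k)) + 2^(2*(cs r k))) := Nat.mul_le_mul_left _ (by omega)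
        _ = 2^(As r k + 2*(cs r k) + 1) := by ring
    have h2 : ((2:ℕ)^(As r k + 2*(cs r k) + 1) : ℝ) = (2:ℝ) ^ ((As r k + 2*(cs r k) + 1 : ℕ) : ℝ) := by
      rw [Real.rpow_natCast]; push_cast; ring
    have h3 : ((As r k + 2*(cs r k) + 1 : ℕ) : ℝ) ≤ (As r k : ℝ) * r := by
      have := As_ge hr k
      push_cast
      nlinarith [Nat.cast_nonneg (α := ℝ) (As r k)]
    calc (x:ℝ) ≤ ((2:ℕ)^(As r k + 2*(cs r k) + 1) : ℝ) := by exact_mod_cast h1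
      _ = (2:ℝ) ^ ((As r k + 2*(cs r k) + 1 : ℕ) : ℝ) := h2
      _ ≤ (2:ℝ) ^ ((As r k : ℝ) * r) := Real.rpow_le_rpow_of_exponent_le (by norm_num) h3
  have h4 : (x : ℝ) ^ (1/r : ℝ) ≤ ((2:ℝ) ^ ((As r k : ℝ) * r)) ^ (1/r : ℝ) :=
    Real.rpow_le_rpow (Nat.cast_nonneg _) hxR (by positivity)
  refine h4.trans ?_
  rw [← Real.rpow_mul (by norm_num : (0:ℝ) ≤ 2)]
  have h5 : (As r k : ℝ) * r * (1/r) = (As r k : ℝ) := by field_simp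
  rw [h5, Real.rpow_natCast]
  push_cast
  norm_num
lemma rpow_self_le {x : ℝ} (hr : 1 < r) (hx : 1 ≤ x) : x ^ (1/r : ℝ) ≤ x := by
  have h := Real.rpow_le_rpow_of_exponent_le hx
    (show (1/r : ℝ) ≤ 1 by
      rw [div_le_one (by linarith)]; linarith)
  simpa [Real.rpow_one] using h

lemma separated (hr : 1 < r) : alphaSeparated (qs r) (1/r) := by
  refine ⟨1, fun m n hm hmn h => ?_⟩
  obtain ⟨s, t, habs1, habs2, hst⟩ := h
  have hn : 1 ≤ n := by omega
  have hKmn : Kf r m ≤ Kf r n := Kf_mono (le_of_lt hmn)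
  set D : ℤ := (s:ℤ) * (qs r m : ℤ) - (t:ℤ) * (qs r n : ℤ) with hD
  have hqm1 : 1 ≤ qs r m := one_le_qs m
  rcases eq_or_lt_of_le hKmn with hsame | hlt
  · -- same block
    set k := Kf r m with hk
    set u : ℕ := 4^(cs r k) + (m - Ns r k - 1) with hu
    set v : ℕ := 4^(cs r k) + (n - Ns r k - 1) with hv
    have hqm : qs r m = 2^(As r k) * u := qs_eq hm
    have hqn : qs r n = 2^(As r k) * v := by
      rw [qs_eq hn, ← hsame]
    have hDE : D = (2^(As r k) : ℤ) * ((s:ℤ) * u - (t:ℤ) * v) := by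
      rw [hD, hqm, hqn]; push_cast; ring
    have hE0 : (s:ℤ) * u - (t:ℤ) * v ≠ 0 := by
      intro h0
      rw [hDE, h0, mul_zero, abs_zero] at habs1
      omega
    have hE : 1 ≤ |(s:ℤ) * u - (t:ℤ) * v| := by
      have := abs_pos.mpr hE0
      omega
    have habsD : (2^(As r k) : ℤ) ≤ |D| := by
      rw [hDE, abs_mul, abs_pow]
      calc (2^(As r k) : ℤ) = 2^(As r k) * 1 := by ring
        _ ≤ |(2:ℤ)|^(As r k) * |(s:ℤ) * u - (t:ℤ) * v| := by
            apply mul_le_mul _ hE (by norm_num) (by positivity)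
            apply pow_le_pow_left₀ (by norm_num)
            norm_num
    have hsb : (qs r m : ℝ) ^ (1/r : ℝ) ≤ ((2:ℕ)^(As r k) : ℝ) :=
      sep_bound hr k (qs_ub (Kf_lt m hm) (Kf_spec m))
    have hcast : ((2:ℕ)^(As r k) : ℝ) ≤ ((|D| : ℤ) : ℝ) := by
      exact_mod_cast habsD
    have hbad : ((|D| : ℤ) : ℝ) < ((|D| : ℤ) : ℝ) := lt_of_lt_of_le habs2 (hsb.trans hcast)
    exact absurd hbad (lt_irrefl _)
  · -- different blocks
    have hcross := cross hr hm hn hlt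
    have hself : (qs r m : ℝ) ^ (1/r : ℝ) ≤ (qs r m : ℝ) :=
      rpow_self_le hr (by exact_mod_cast hqm1)
    have hqD : (qs r m : ℤ) ≤ |D| := by
      rcases Nat.eq_zero_or_pos t with ht0 | htpos
      · -- t = 0 : D = s * qm, and s ≥ 1
        subst ht0
        have hs1 : 1 ≤ s := by
          by_contra hc
          have : s = 0 := by omega
          subst this
          simp [hD] at habs1
        have : D = (s:ℤ) * qs r m := by rw [hD]; push_cast; ring
        rw [this, abs_mul, abs_of_nonneg (by positivity : (0:ℤ) ≤ ((qs r m : ℤ)))]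
        calc (qs r m : ℤ) = 1 * qs r m := by ring
          _ ≤ |(s:ℤ)| * qs r m := by
              apply mul_le_mul_of_nonneg_right _ (by positivity)
              rw [abs_of_nonneg (by positivity)]
              exact_mod_cast hs1
      · -- t ≥ 1 : t*qn − s*qm ≥ qn − m^5*qm ≥ qm
        have h1 : (s:ℤ) * qs r m ≤ (m^5 : ℤ) * qs r m := by
          apply mul_le_mul_of_nonneg_right _ (by positivity)
          exact_mod_cast hst
        have h2 : ((m^5 : ℕ) : ℤ) * qs r m + qs r m ≤ (qs r n : ℤ) := by
          exact_mod_cast hcross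
        have h3 : (qs r n : ℤ) ≤ (t:ℤ) * qs r n := by
          calc (qs r n : ℤ) = 1 * qs r n := by ring
            _ ≤ (t:ℤ) * qs r n := by
                apply mul_le_mul_of_nonneg_right _ (by positivity)
                exact_mod_cast htpos
        have h4 : D ≤ -(qs r m : ℤ) := by
          rw [hD]
          push_cast at h2 ⊢
          linarith
        rw [abs_of_nonpos (by linarith : D ≤ 0)]
        linarith
    have hcast : ((qs r m : ℕ) : ℝ) ≤ ((|D| : ℤ) : ℝ) := by exact_mod_cast hqD
    linarith
lemma gcd_bound (hr : 1 < r) (n : ℕ) :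
    ∑ m ∈ Finset.Ico 1 n, (Nat.gcd (qs r m) (qs r n) : ℝ) / (qs r n : ℝ) ≤ 2 := by
  rcases Nat.lt_or_ge n 2 with hn2 | hn2
  · have he : Finset.Ico 1 n = ∅ := Finset.Ico_eq_empty (by omega)
    rw [he, Finset.sum_empty]; norm_num
  have hn : 1 ≤ n := by omega
  set k := Kf r n with hk
  have h1 : Ns r k < n := Kf_lt n hn
  have h2 : n ≤ Ns r (k+1) := Kf_spec n
  have hqn1 : 1 ≤ qs r n := one_le_qs n
  have hqn_pos : (0:ℝ) < (qs r n : ℝ) := by exact_mod_cast hqn1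
  have hsplit : ∑ m ∈ Finset.Ico 1 (Ns r k + 1), (Nat.gcd (qs r m) (qs r n) : ℝ) / (qs r n : ℝ)
      + ∑ m ∈ Finset.Ico (Ns r k + 1) n, (Nat.gcd (qs r m) (qs r n) : ℝ) / (qs r n : ℝ)
      = ∑ m ∈ Finset.Ico 1 n, (Nat.gcd (qs r m) (qs r n) : ℝ) / (qs r n : ℝ) :=
    Finset.sum_Ico_consecutive _ (by omega) (by omega)
  rw [← hsplit]
  have hA : ∑ m ∈ Finset.Ico 1 (Ns r k + 1),
      (Nat.gcd (qs r m) (qs r n) : ℝ) / (qs r n : ℝ) ≤ 1 := by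
    rcases Nat.eq_zero_or_pos k with hk0 | hkpos
    · have he : Finset.Ico 1 (Ns r k + 1) = ∅ := by
        apply Finset.Ico_eq_empty
        rw [hk0]
        show ¬ (1 < Ns r 0 + 1)
        simp [Ns]
      rw [he, Finset.sum_empty]; norm_num
    · have hke : k - 1 + 1 = k := by omega
      have hNk1 : 1 ≤ Ns r k := by
        have h3 := succ_le_Ns (r := r) (k-1)
        rw [hke] at h3; omega
      have hNlt : Ns r (k-1) < Ns r k := by
        have h3 := Ns_lt_succ (r := r) (k-1); rw [hke] at h3; exact h3
      have hub : qs r (Ns r k) ≤ 2^(As r (k-1)) * (4^(cs r (k-1)) + 2^(cs r (k-1))) := by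
        have h3 := qs_ub (r := r) (k := k-1) hNlt (by rw [hke])
        exact h3
      have hgap := gap hr (k-1)
      rw [hke] at hgap
      have hkey : Ns r k * qs r (Ns r k) ≤ qs r n := by
        have hlbn := qs_lb (r := r) h1 h2
        have hp5 : Ns r k ≤ (Ns r k)^5 := Nat.le_self_pow (by norm_num) _
        calc Ns r k * qs r (Ns r k)
            ≤ (Ns r k)^5 * (2^(As r (k-1)) * (4^(cs r (k-1)) + 2^(cs r (k-1)))) :=
              Nat.mul_le_mul hp5 hub
          _ ≤ 2^(As r k) * 4^(cs r k) := by omega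
          _ ≤ qs r n := hlbn
      have hterm : ∀ m ∈ Finset.Ico 1 (Ns r k + 1),
          (Nat.gcd (qs r m) (qs r n) : ℝ) / (qs r n : ℝ) ≤ (qs r (Ns r k) : ℝ) / (qs r n : ℝ) := by
        intro m hmem
        rw [Finset.mem_Ico] at hmem
        have hg1 : Nat.gcd (qs r m) (qs r n) ≤ qs r m :=
          Nat.gcd_le_left _ (Nat.lt_of_lt_of_le Nat.zero_lt_one (one_le_qs m))
        have hg2 : qs r m ≤ qs r (Ns r k) := (qs_mono hr).monotone (by omega)
        gcongr
        exact_mod_cast hg1.trans hg2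
      calc ∑ m ∈ Finset.Ico 1 (Ns r k + 1), (Nat.gcd (qs r m) (qs r n) : ℝ) / (qs r n : ℝ)
          ≤ (Finset.Ico 1 (Ns r k + 1)).card • ((qs r (Ns r k) : ℝ) / (qs r n : ℝ)) :=
            Finset.sum_le_card_nsmul _ _ _ hterm
        _ = (Ns r k : ℝ) * ((qs r (Ns r k) : ℝ) / (qs r n : ℝ)) := by
            rw [Nat.card_Ico, nsmul_eq_mul]
            norm_num
        _ = ((Ns r k * qs r (Ns r k) : ℕ) : ℝ) / (qs r n : ℝ) := by
            push_cast; ring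
        _ ≤ 1 := by
            rw [div_le_one hqn_pos]
            exact_mod_cast hkey
  have hB : ∑ m ∈ Finset.Ico (Ns r k + 1) n,
      (Nat.gcd (qs r m) (qs r n) : ℝ) / (qs r n : ℝ) ≤ 1 := by
    have hqn_lb : 2^(As r k) * 4^(cs r k) ≤ qs r n := qs_lb h1 h2
    have hterm : ∀ m ∈ Finset.Ico (Ns r k + 1) n,
        (Nat.gcd (qs r m) (qs r n) : ℝ) / (qs r n : ℝ)
          ≤ ((2^(As r k) * 2^(cs r k) : ℕ) : ℝ) / ((2^(As r k) * 4^(cs r k) : ℕ) : ℝ) := by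
      intro m hmem
      rw [Finset.mem_Ico] at hmem
      have hm1 : Ns r k < m := by omega
      have hm2 : m ≤ Ns r (k+1) := by omega
      have e_n : qs r n = 2^(As r k) * 4^(cs r k) + 2^(As r k) * (n - Ns r k - 1) := by
        rw [qs_eq' h1 h2]; ring
      have e_m : qs r m = 2^(As r k) * 4^(cs r k) + 2^(As r k) * (m - Ns r k - 1) := by
        rw [qs_eq' hm1 hm2]; ring
      have hon : n - Ns r k - 1 < 2^(cs r k) := offset_lt h1 h2
      have hmul : 2^(As r k) * (n - Ns r k - 1) ≤ 2^(As r k) * 2^(cs r k) :=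
        Nat.mul_le_mul_left _ (by omega)
      have hlt : qs r m < qs r n := qs_mono hr (by omega)
      have hdvd : Nat.gcd (qs r m) (qs r n) ∣ qs r n - qs r m :=
        Nat.dvd_sub (Nat.gcd_dvd_right _ _) (Nat.gcd_dvd_left _ _)
      have hgle : Nat.gcd (qs r m) (qs r n) ≤ qs r n - qs r m :=
        Nat.le_of_dvd (by omega) hdvd
      have hgle2 : Nat.gcd (qs r m) (qs r n) ≤ 2^(As r k) * 2^(cs r k) := by omega
      apply div_le_div₀ (by positivity) (by exact_mod_cast hgle2)
        (by positivity) (by exact_mod_cast hqn_lb)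
    calc ∑ m ∈ Finset.Ico (Ns r k + 1) n, (Nat.gcd (qs r m) (qs r n) : ℝ) / (qs r n : ℝ)
        ≤ (Finset.Ico (Ns r k + 1) n).card •
            (((2^(As r k) * 2^(cs r k) : ℕ) : ℝ) / ((2^(As r k) * 4^(cs r k) : ℕ) : ℝ)) :=
          Finset.sum_le_card_nsmul _ _ _ hterm
      _ ≤ ((2^(cs r k) : ℕ) : ℝ) *
            (((2^(As r k) * 2^(cs r k) : ℕ) : ℝ) / ((2^(As r k) * 4^(cs r k) : ℕ) : ℝ)) := by
          rw [nsmul_eq_mul]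
          apply mul_le_mul_of_nonneg_right
          · rw [Nat.card_Ico]
            have hcard : n - (Ns r k + 1) ≤ 2^(cs r k) := by
              have := offset_lt (r := r) h1 h2
              omega
            exact_mod_cast hcard
          · positivity
      _ = 1 := by
          push_cast
          have h4 : (4:ℝ)^(cs r k) = 2^(cs r k) * 2^(cs r k) := by
            rw [show (4:ℝ) = 2*2 by norm_num, mul_pow]
          rw [h4]
          have hp : (0:ℝ) < (2:ℝ)^(As r k) := by positivity
          have hp2 : (0:ℝ) < (2:ℝ)^(cs r k) := by positivity
          field_simp
  linarith
lemma cs_ge_id (hr : 1 < r) (k : ℕ) : k ≤ cs r k := (cs_mono hr).le_apply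

lemma growth (hr : 1 < r) {p : ℝ} (hp : 6*r < p) :
    ∃ t₀ : ℕ, ∀ t, t₀ ≤ t → Real.log (qs r t) / Real.log t ≤ p/(r-1) + 1 := by
  set T : ℕ := ⌈3*r⌉₊ with hT
  refine ⟨Ns r (T+1) + 1, fun t ht => ?_⟩
  have hNsT : T + 1 ≤ Ns r (T+1) := succ_le_Ns T
  have ht2 : 2 ≤ t := by omega
  have ht1 : 1 ≤ t := by omega
  set k := Kf r t with hk
  have h1 : Ns r k < t := Kf_lt t ht1
  have h2 : t ≤ Ns r (k+1) := Kf_spec t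
  -- T + 1 ≤ k
  have hTk : T + 1 ≤ k := by
    by_contra hc
    have hmono : Ns r (k+1) ≤ Ns r (T+1) := (Ns_mono (r := r)).monotone (by omega)
    omega
  have hk1 : 1 ≤ k := by omega
  have hke : k - 1 + 1 = k := by omega
  -- log t ≥ cs r (k-1) * log 2
  have hNlb : 2^(cs r (k-1)) ≤ t := by
    have h3 : Ns r (k-1+1) = Ns r (k-1) + 2^(cs r (k-1)) := rfl
    rw [hke] at h3
    omega
  have hlogt : (cs r (k-1) : ℝ) * Real.log 2 ≤ Real.log t := by
    calc (cs r (k-1) : ℝ) * Real.log 2 = Real.log ((2:ℝ)^(cs r (k-1))) := by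
          rw [Real.log_pow]
      _ ≤ Real.log t := by
          apply Real.log_le_log (by positivity)
          exact_mod_cast hNlb
  have hlogt_pos : 0 < Real.log t := by
    apply Real.log_pos
    exact_mod_cast ht2
  -- log q t ≤ (A + 2c + 1) log 2
  have hq_ub : qs r t ≤ 2^(As r k + 2*(cs r k) + 1) := by
    refine (qs_ub h1 h2).trans ?_
    rw [four_pow]
    have h3 : (2:ℕ)^(cs r k) ≤ 2^(2*(cs r k)) := Nat.pow_le_pow_right (by norm_num) (by omega)
    calc 2^(As r k) * (2^(2*(cs r k)) + 2^(cs r k))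
        ≤ 2^(As r k) * (2^(2*(cs r k)) + 2^(2*(cs r k))) := Nat.mul_le_mul_left _ (by omega)
      _ = 2^(As r k + 2*(cs r k) + 1) := by ring
  have hlogq : Real.log (qs r t) ≤ ((As r k + 2*(cs r k) + 1 : ℕ) : ℝ) * Real.log 2 := by
    calc Real.log (qs r t) ≤ Real.log ((2:ℝ)^(As r k + 2*(cs r k) + 1)) := by
          apply Real.log_le_log
          · have := one_le_qs (r := r) t
            exact_mod_cast Nat.lt_of_lt_of_le Nat.zero_lt_one this
          · exact_mod_cast hq_ub
      _ = ((As r k + 2*(cs r k) + 1 : ℕ) : ℝ) * Real.log 2 := by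
          rw [Real.log_pow]
  -- key inequality : (A + 2c + 1) ≤ (p/(r-1) + 1) * cs r (k-1)
  have hc'3r : 3*r ≤ (cs r (k-1) : ℝ) := by
    have hcm : cs r T ≤ cs r (k-1) := (cs_mono hr).monotone (by omega)
    have hcT : T ≤ cs r T := cs_ge_id hr T
    have h3r : (3*r : ℝ) ≤ T := Nat.le_ceil _
    have : (T : ℝ) ≤ (cs r (k-1) : ℝ) := by exact_mod_cast hcm.trans' hcT
    linarith
  have hkey : ((As r k + 2*(cs r k) + 1 : ℕ) : ℝ) ≤ (p/(r-1) + 1) * (cs r (k-1) : ℝ) := by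
    have hd : (0:ℝ) < r - 1 := by linarith
    have hAle := As_le hr k
    have hcle := cs_succ_le hr (k-1)
    rw [hke] at hcle
    have hgoal : ((As r k + 2*(cs r k) + 1 : ℕ) : ℝ) * (r-1) ≤ (p + (r-1)) * (cs r (k-1) : ℝ) := by
      push_cast
      nlinarith [Nat.cast_nonneg (α := ℝ) (cs r k), Nat.cast_nonneg (α := ℝ) (As r k),
        Nat.cast_nonneg (α := ℝ) (cs r (k-1))]
    have heq : (p/(r-1) + 1) * (cs r (k-1) : ℝ) = ((p + (r-1)) * (cs r (k-1) : ℝ)) / (r-1) := by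
      field_simp
    rw [heq, le_div_iff₀ hd]
    exact hgoal
  -- conclude
  rw [div_le_iff₀ hlogt_pos]
  have hnn : (0:ℝ) ≤ p/(r-1) + 1 := by
    have hd : (0:ℝ) < r - 1 := by linarith
    have : (0:ℝ) < p := by linarith
    positivity
  calc Real.log (qs r t) ≤ ((As r k + 2*(cs r k) + 1 : ℕ) : ℝ) * Real.log 2 := hlogq
    _ ≤ ((p/(r-1) + 1) * (cs r (k-1) : ℝ)) * Real.log 2 := by
        apply mul_le_mul_of_nonneg_right hkey (Real.log_nonneg (by norm_num))
    _ = (p/(r-1) + 1) * ((cs r (k-1) : ℝ) * Real.log 2) := by ring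
    _ ≤ (p/(r-1) + 1) * Real.log t := mul_le_mul_of_nonneg_left hlogt hnn
end Sep16

/-- existence of a `(1/ρ₁)`-separated sequence of polynomial growth with
bounded gcd sums, which therefore satisfies `E(N) = O(Ψ(N))` for every `ψ` and `γ`. -/
theorem exists_alphaSeparated_polynomial_growth_gcd_bounded
    (ρ₁ ρ₂ : ℝ) (hρ₁ : 1 < ρ₁) (hρ₁ρ₂ : 6 * ρ₁ < ρ₂) :
    ∃ q : ℕ → ℕ, StrictMono q ∧ (∀ t, 1 ≤ q t) ∧
      alphaSeparated q (1 / ρ₁) ∧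
      (∃ Cg : ℝ, ∀ n : ℕ,
        ∑ m ∈ Finset.Ico 1 n, (Nat.gcd (q m) (q n) : ℝ) / (q n : ℝ) ≤ Cg) ∧
      (∀ ε : ℝ, 0 < ε → ∃ t₀ : ℕ, ∀ t : ℕ, t₀ ≤ t →
        Real.log (q t) / Real.log t ≤ ρ₂ / (ρ₁ - 1) + 1 + ε) ∧
      (∀ ψ : ℕ → ℝ, (∀ n, ψ n ∈ Set.Icc (0:ℝ) 1) →
        ∀ γ : ℝ, γ ∈ Set.Icc (0:ℝ) 1 →
          ∃ C : ℝ, ∀ N : ℕ, gcdErr q ψ N ≤ C * PsiSum q ψ N) := by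
  refine ⟨Sep16.qs ρ₁, Sep16.qs_mono hρ₁, fun t => Sep16.one_le_qs t,
    Sep16.separated hρ₁, ⟨2, Sep16.gcd_bound hρ₁⟩, ?_, ?_⟩
  · intro ε hε
    obtain ⟨t₀, h⟩ := Sep16.growth hρ₁ hρ₁ρ₂
    exact ⟨t₀, fun t ht => (h t ht).trans (by linarith)⟩
  · intro ψ hψ γ hγ
    refine ⟨2, fun N => ?_⟩
    rw [gcdErr, PsiSum, Finset.mul_sum]
    apply Finset.sum_le_sum
    intro n hn
    have hψn := hψ (Sep16.qs ρ₁ n)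
    rw [Set.mem_Icc] at hψn
    calc ∑ m ∈ Finset.Ico 1 n, (Nat.gcd (Sep16.qs ρ₁ m) (Sep16.qs ρ₁ n) : ℝ) *
            min (ψ (Sep16.qs ρ₁ m) / (Sep16.qs ρ₁ m : ℝ)) (ψ (Sep16.qs ρ₁ n) / (Sep16.qs ρ₁ n : ℝ))
        ≤ ∑ m ∈ Finset.Ico 1 n, (Nat.gcd (Sep16.qs ρ₁ m) (Sep16.qs ρ₁ n) : ℝ) *
            (ψ (Sep16.qs ρ₁ n) / (Sep16.qs ρ₁ n : ℝ)) := by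
          apply Finset.sum_le_sum
          intro m hm
          exact mul_le_mul_of_nonneg_left (min_le_right _ _) (Nat.cast_nonneg _)
      _ = ψ (Sep16.qs ρ₁ n) * ∑ m ∈ Finset.Ico 1 n,
            (Nat.gcd (Sep16.qs ρ₁ m) (Sep16.qs ρ₁ n) : ℝ) / (Sep16.qs ρ₁ n : ℝ) := by
          rw [Finset.mul_sum]
          apply Finset.sum_congr rfl
          intro m hm
          ring
      _ ≤ ψ (Sep16.qs ρ₁ n) * 2 :=
          mul_le_mul_of_nonneg_left (Sep16.gcd_bound hρ₁ n) hψn.1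
      _ = 2 * ψ (Sep16.qs ρ₁ n) := by ring
end
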